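/- arXiv:2411.05773 — 3 statements merged into one kernel-verified Lean document; each statement's English description precedes it below -/
import Mathlib

section
/- Let 0 ≤ α < 2, set κ = (2−α)/2 and ν = |1−α|/(2−α), and let j > 0. Suppose y : (0,∞) → ℝ is twice differentiable and satisfies Bessel's differential equation of order ν, i.e. t²·y''(t) + t·y'(t) + (t² − ν²)·y(t) = 0 for all t > 0. Then the function u(x) := x^{(1−α)/2}·y(j·x^κ) is an eigenfunction of the degenerate diffusion operator: for every x ∈ (0,1), the function x ↦ x^α·u'(x) is differentiable at x and its derivative equals −κ²·j²·u(x). -/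
open Real Set

/-- If `y` is twice differentiable on `(0,∞)` and solves Bessel's equation of
order `ν = |1-α|/(2-α)`, then `u(x) = x^((1-α)/2) · y(j·x^κ)` with `κ = (2-α)/2` satisfies
`(x^α u')' = -κ²j²·u` on `(0,1)`. -/
theorem degenerate_eigenfunction_from_bessel
    (α : ℝ) (hα0 : 0 ≤ α) (hα2 : α < 2) (j : ℝ) (hj : 0 < j)
    (y : ℝ → ℝ)
    (hy : ∀ t : ℝ, 0 < t → DifferentiableAt ℝ y t)
    (hy' : ∀ t : ℝ, 0 < t → DifferentiableAt ℝ (deriv y) t)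
    (hBessel : ∀ t : ℝ, 0 < t →
      t ^ 2 * deriv (deriv y) t + t * deriv y t
        + (t ^ 2 - (|1 - α| / (2 - α)) ^ 2) * y t = 0) :
    ∀ x ∈ Set.Ioo (0 : ℝ) 1,
      HasDerivAt
        (fun s : ℝ => s ^ α *
          deriv (fun z : ℝ => z ^ ((1 - α) / 2) * y (j * z ^ ((2 - α) / 2))) s)
        (-(((2 - α) / 2) ^ 2 * j ^ 2) *
          (x ^ ((1 - α) / 2) * y (j * x ^ ((2 - α) / 2)))) x := by
  rintro x ⟨hx0, hx1⟩
  have h2α : (0:ℝ) < 2 - α := by linarith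
  set κ : ℝ := (2 - α) / 2 with hκdef
  set β : ℝ := (1 - α) / 2 with hβdef
  have hκ0 : 0 < κ := by rw [hκdef]; linarith
  -- derivative of u on positive reals
  have hu : ∀ z : ℝ, 0 < z → HasDerivAt (fun z : ℝ => z ^ β * y (j * z ^ κ))
      (β * z ^ (β - 1) * y (j * z ^ κ)
        + z ^ β * (deriv y (j * z ^ κ) * (j * (κ * z ^ (κ - 1))))) z := by
    intro z hz
    have hXz : 0 < z ^ κ := Real.rpow_pos_of_pos hz _
    have hinner : HasDerivAt (fun z : ℝ => j * z ^ κ) (j * (κ * z ^ (κ - 1))) z :=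
      (Real.hasDerivAt_rpow_const (Or.inl hz.ne')).const_mul j
    exact (Real.hasDerivAt_rpow_const (Or.inl hz.ne')).mul
      (((hy _ (mul_pos hj hXz)).hasDerivAt).comp z hinner)
  -- g : the simplified form of s^α * u'(s)
  set g : ℝ → ℝ := fun s =>
    β * (s ^ (-β) * y (j * s ^ κ)) + (j * κ) * (s ^ ((1:ℝ)/2) * deriv y (j * s ^ κ)) with hgdef
  have heq : (fun s : ℝ => s ^ α *
      deriv (fun z : ℝ => z ^ β * y (j * z ^ κ)) s) =ᶠ[nhds x] g := by
    filter_upwards [Ioi_mem_nhds hx0] with s hs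
    have hs0 : (0:ℝ) < s := hs
    rw [(hu s hs0).deriv, hgdef]
    have h1 : s ^ α * s ^ (β - 1) = s ^ (-β) := by
      rw [← Real.rpow_add hs0]; congr 1; rw [hβdef]; ring
    have h2 : s ^ α * (s ^ β * s ^ (κ - 1)) = s ^ ((1:ℝ)/2) := by
      rw [← Real.rpow_add hs0, ← Real.rpow_add hs0]; congr 1; rw [hβdef, hκdef]; ring
    simp only
    linear_combination (y (j * s ^ κ)) * β * h1 + (j * κ * deriv y (j * s ^ κ)) * h2
  -- derivative of g at x
  have hX0 : 0 < x ^ κ := Real.rpow_pos_of_pos hx0 _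
  have ht : 0 < j * x ^ κ := mul_pos hj hX0
  set Y := y (j * x ^ κ) with hYdef
  set Y' := deriv y (j * x ^ κ) with hY'def
  set Y'' := deriv (deriv y) (j * x ^ κ) with hY''def
  have hinner : HasDerivAt (fun z : ℝ => j * z ^ κ) (j * (κ * x ^ (κ - 1))) x :=
    (Real.hasDerivAt_rpow_const (Or.inl hx0.ne')).const_mul j
  have hg1 : HasDerivAt (fun s : ℝ => s ^ (-β) * y (j * s ^ κ))
      ((-β) * x ^ (-β - 1) * Y + x ^ (-β) * (Y' * (j * (κ * x ^ (κ - 1))))) x :=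
    (Real.hasDerivAt_rpow_const (Or.inl hx0.ne')).mul
      (((hy _ ht).hasDerivAt).comp x hinner)
  have hg2 : HasDerivAt (fun s : ℝ => s ^ ((1:ℝ)/2) * deriv y (j * s ^ κ))
      (((1:ℝ)/2) * x ^ ((1:ℝ)/2 - 1) * Y' + x ^ ((1:ℝ)/2) * (Y'' * (j * (κ * x ^ (κ - 1))))) x :=
    (Real.hasDerivAt_rpow_const (Or.inl hx0.ne')).mul
      (show HasDerivAt (fun s : ℝ => deriv y (j * s ^ κ)) (Y'' * (j * (κ * x ^ (κ - 1)))) x from HasDerivAt.comp (h₂ := deriv y) (h := fun z : ℝ => j * z ^ κ) x (hy' _ ht).hasDerivAt hinner)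
  have hg : HasDerivAt g
      (β * ((-β) * x ^ (-β - 1) * Y + x ^ (-β) * (Y' * (j * (κ * x ^ (κ - 1)))))
        + (j * κ) * (((1:ℝ)/2) * x ^ ((1:ℝ)/2 - 1) * Y'
            + x ^ ((1:ℝ)/2) * (Y'' * (j * (κ * x ^ (κ - 1)))))) x :=
    (hg1.const_mul β).add (hg2.const_mul (j * κ))
  -- the Bessel equation at t = j * x^κ
  have hB := hBessel (j * x ^ κ) ht
  -- final algebraic identification
  have hfinal :
      β * ((-β) * x ^ (-β - 1) * Y + x ^ (-β) * (Y' * (j * (κ * x ^ (κ - 1)))))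
        + (j * κ) * (((1:ℝ)/2) * x ^ ((1:ℝ)/2 - 1) * Y'
            + x ^ ((1:ℝ)/2) * (Y'' * (j * (κ * x ^ (κ - 1)))))
      = -(κ ^ 2 * j ^ 2) * (x ^ β * Y) := by
    set P : ℝ := x ^ β with hPdef
    set X : ℝ := x ^ κ with hXdef
    have hP : 0 < P := Real.rpow_pos_of_pos hx0 _
    have hXpos : 0 < X := Real.rpow_pos_of_pos hx0 _
    have hX2 : x ^ (2*κ) = X ^ 2 := by
      rw [show (2:ℝ)*κ = κ + κ by ring, Real.rpow_add hx0, sq, hXdef]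
    have e1 : x ^ (-β - 1) = P / X ^ 2 := by
      rw [show -β - 1 = β - 2*κ by rw [hβdef, hκdef]; ring, Real.rpow_sub hx0, hX2, hPdef]
    have c1 : x ^ (-β) * x ^ (κ - 1) = P / X := by
      rw [← Real.rpow_add hx0, show -β + (κ - 1) = β - κ by rw [hβdef, hκdef]; ring,
        Real.rpow_sub hx0, hPdef, hXdef]
    have e4 : x ^ ((1:ℝ)/2 - 1) = P / X := by
      rw [show (1:ℝ)/2 - 1 = β - κ by rw [hβdef, hκdef]; ring, Real.rpow_sub hx0, hPdef, hXdef]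
    have c2 : x ^ ((1:ℝ)/2) * x ^ (κ - 1) = P := by
      rw [← Real.rpow_add hx0, show (1:ℝ)/2 + (κ - 1) = β by rw [hβdef, hκdef]; ring, hPdef]
    have hν2 : β ^ 2 = (|1 - α| / (2 - α)) ^ 2 * κ ^ 2 := by
      rw [hβdef, hκdef, div_pow, div_pow, sq_abs]
      field_simp
    have hB2 : κ^2 * ((j*X)^2 * Y'') + κ^2 * ((j*X) * Y') + (κ^2*(j*X)^2 - β^2) * Y = 0 := by
      linear_combination κ^2 * hB - Y * hν2
    have hbk : κ = β + 1/2 := by rw [hβdef, hκdef]; ring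
    have hz : X * (1/X) = 1 := by field_simp
    linear_combination (-β^2*Y) * e1 + (β*j*κ*Y') * c1 + (j*κ/2*Y') * e4
      + (j^2*κ^2*Y'') * c2 + (P/X^2) * hB2
      + ( -(κ^2*j*P/X*Y') - j^2*κ^2*P*(X/X+1)*(Y''+Y) ) * hz
      + ( -(j*κ*P/X*Y') ) * hbk
  exact hfinal ▸ (hg.congr_of_eventuallyEq heq)
end

section
/- Let ν be a real number with ν > −1, and let J_ν : (0,∞) → ℝ be the Bessel function of the first kind of order ν, defined by the convergent series J_ν(x) = Σ_{m≥0} (−1)^m / (m!·Γ(1+ν+m)) · (x/2)^{2m+ν}. Suppose j : ℕ≥1 → (0,∞) is a strictly increasing sequence such that J_ν(j_n) = 0 for every n ≥ 1 and such that every x > 0 with J_ν(x) = 0 equals j_n for some n ≥ 1 (i.e. (j_n) enumerates all positive zeros of J_ν in increasing order). Then: (i) the difference sequence (j_{n+1} − j_n)_{n≥1} converges to π as n → ∞; (ii) the sequence (j_{n+1} − j_n)_{n≥1} is strictly decreasing if |ν| > 1/2, strictly increasing if |ν| < 1/2, and constant if |ν| = 1/2. -/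
open Real Filter

namespace BG
open Set Topology

noncomputable def c (ν : ℝ) (m : ℕ) : ℝ :=
  (-1)^m / (4^m * m.factorial * Real.Gamma (1 + ν + m))

variable {ν : ℝ}

lemma gamma_arg_pos (hν : -1 < ν) (m : ℕ) : 0 < 1 + ν + m := by
  have : (0:ℝ) ≤ m := Nat.cast_nonneg m
  linarith

lemma gamma_pos (hν : -1 < ν) (m : ℕ) : 0 < Real.Gamma (1 + ν + m) :=
  Real.Gamma_pos_of_pos (gamma_arg_pos hν m)

lemma c_abs (hν : -1 < ν) (m : ℕ) :
    |c ν m| = 1 / (4^m * m.factorial * Real.Gamma (1 + ν + m)) := by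
  rw [c, abs_div, abs_pow, abs_neg, abs_one, one_pow]
  congr 1
  have h1 : (0:ℝ) < 4^m := by positivity
  have h2 : (0:ℝ) < m.factorial := by exact_mod_cast m.factorial_pos
  have := gamma_pos hν m
  rw [abs_of_pos (by positivity)]

lemma c_pos_abs (hν : -1 < ν) (m : ℕ) : 0 < |c ν m| := by
  rw [c_abs hν m]
  have h2 : (0:ℝ) < m.factorial := by exact_mod_cast m.factorial_pos
  have := gamma_pos hν m
  positivity

lemma c_ne (hν : -1 < ν) (m : ℕ) : c ν m ≠ 0 := by
  intro h; have := c_pos_abs hν m; rw [h, abs_zero] at this; exact lt_irrefl 0 this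

lemma c_rec (hν : -1 < ν) (m : ℕ) :
    c ν (m+1) = -c ν m / (4 * (m+1) * (1 + ν + m)) := by
  have hg : Real.Gamma (1 + ν + ((m:ℝ)+1)) = (1 + ν + m) * Real.Gamma (1 + ν + m) := by
    have h : (1:ℝ) + ν + ((m:ℝ)+1) = (1 + ν + m) + 1 := by ring
    rw [h, Real.Gamma_add_one (gamma_arg_pos hν m).ne']
  have hfac : ((m+1).factorial : ℝ) = (m+1) * m.factorial := by
    rw [Nat.factorial_succ]; push_cast; ring
  have h1 : (0:ℝ) < 4^m := by positivity
  have h2 : (0:ℝ) < m.factorial := by exact_mod_cast m.factorial_pos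
  have h3 := gamma_pos hν m
  have h4 : (0:ℝ) < 1 + ν + m := gamma_arg_pos hν m
  have h5 : (0:ℝ) < (m:ℝ) + 1 := by positivity
  rw [c, c]
  push_cast
  rw [hg, hfac, pow_succ]
  field_simp
  ring

lemma abs_c_rec (hν : -1 < ν) (m : ℕ) :
    |c ν (m+1)| = |c ν m| / (4 * (m+1) * (1 + ν + m)) := by
  have h4 : (0:ℝ) < 1 + ν + m := gamma_arg_pos hν m
  have h5 : (0:ℝ) < (m:ℝ) + 1 := by positivity
  rw [c_rec hν m, abs_div, abs_neg, abs_of_pos (by positivity : (0:ℝ) < 4 * (m+1) * (1+ν+m))]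

/-- Master summability bound. -/
lemma master (hν : -1 < ν) {R : ℝ} (hR : 1 ≤ R) :
    Summable (fun m : ℕ => |c ν m| * (m+1)^2 * R^m) := by
  have hR0 : 0 < R := lt_of_lt_of_le one_pos hR
  have hpos : ∀ m : ℕ, 0 < |c ν m| * (m+1:ℝ)^2 * R^m := by
    intro m
    have := c_pos_abs hν m
    positivity
  apply summable_of_ratio_test_tendsto_lt_one (l := 0) one_pos
  · exact Filter.Eventually.of_forall (fun m => (hpos m).ne')
  · have hto : Tendsto (fun m : ℕ => R / (1 + ν + m)) atTop (𝓝 0) := by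
      apply Tendsto.div_atTop tendsto_const_nhds
      exact tendsto_atTop_add_const_left _ _ tendsto_natCast_atTop_atTop
    apply squeeze_zero (fun m => by positivity) _ hto
    intro m
    have h4 : (0:ℝ) < 1 + ν + m := gamma_arg_pos hν m
    have h5 : (0:ℝ) < (m:ℝ) + 1 := by positivity
    have hc := c_pos_abs hν m
    have hRm : (0:ℝ) < R^m := by positivity
    rw [Real.norm_eq_abs, Real.norm_eq_abs, abs_of_pos (hpos (m+1)), abs_of_pos (hpos m),
      div_le_div_iff₀ (hpos m) h4, abs_c_rec hν m]
    push_cast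
    rw [pow_succ R m]
    have key : ((m:ℝ)+1+1)^2 ≤ 4 * ((m:ℝ)+1)^2 * ((m:ℝ)+1) := by nlinarith
    rw [div_mul_eq_mul_div, div_mul_eq_mul_div, div_mul_eq_mul_div, div_le_iff₀ (by positivity)]
    nlinarith [mul_pos hc hRm, mul_pos (mul_pos hc hRm) hR0,
      mul_le_mul_of_nonneg_left key (le_of_lt (mul_pos (mul_pos hc hRm) hR0))]

noncomputable def g0 (ν : ℝ) (t : ℝ) : ℝ := ∑' m : ℕ, c ν m * t^m
noncomputable def g1 (ν : ℝ) (t : ℝ) : ℝ := ∑' m : ℕ, c ν m * ((m:ℝ) * t^(m-1))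
noncomputable def g2 (ν : ℝ) (t : ℝ) : ℝ :=
  ∑' m : ℕ, c ν m * ((m:ℝ) * (((m:ℝ)-1) * t^(m-2)))

lemma summable_of_master (hν : -1 < ν) {R : ℝ} (hR : 1 ≤ R) {f : ℕ → ℝ}
    (hf : ∀ m, |f m| ≤ |c ν m| * (m+1)^2 * R^m) : Summable f :=
  Summable.of_norm ((master hν hR).of_nonneg_of_le (fun m => abs_nonneg _) hf)

lemma bound_g0 (hν : -1 < ν) {R : ℝ} (hR : 1 ≤ R) {x : ℝ} (hx : |x| ≤ R) (m : ℕ) :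
    |c ν m * x^m| ≤ |c ν m| * (m+1)^2 * R^m := by
  have h1 : |x^m| ≤ R^m := by
    rw [abs_pow]; exact pow_le_pow_left₀ (abs_nonneg x) hx m
  have h2 : (1:ℝ) ≤ ((m:ℝ)+1)^2 := by nlinarith [Nat.cast_nonneg (α := ℝ) m]
  calc |c ν m * x^m| = |c ν m| * |x^m| := abs_mul _ _
    _ ≤ |c ν m| * (1 * R^m) := by
        rw [one_mul]; exact mul_le_mul_of_nonneg_left h1 (abs_nonneg _)
    _ ≤ |c ν m| * (((m:ℝ)+1)^2 * R^m) := by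
        apply mul_le_mul_of_nonneg_left _ (abs_nonneg _)
        apply mul_le_mul_of_nonneg_right h2 (by positivity)
    _ = |c ν m| * ((m:ℝ)+1)^2 * R^m := by ring

lemma bound_g1 (hν : -1 < ν) {R : ℝ} (hR : 1 ≤ R) {x : ℝ} (hx : |x| ≤ R) (m : ℕ) :
    |c ν m * ((m:ℝ) * x^(m-1))| ≤ |c ν m| * (m+1)^2 * R^m := by
  have hR0 : (0:ℝ) < R := lt_of_lt_of_le one_pos hR
  have h1 : |x^(m-1)| ≤ R^m := by
    rw [abs_pow]
    calc |x|^(m-1) ≤ R^(m-1) := pow_le_pow_left₀ (abs_nonneg x) hx _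
      _ ≤ R^m := pow_le_pow_right₀ hR (Nat.sub_le m 1)
  have h2 : (m:ℝ) ≤ ((m:ℝ)+1)^2 := by nlinarith [Nat.cast_nonneg (α := ℝ) m]
  calc |c ν m * ((m:ℝ) * x^(m-1))| = |c ν m| * ((m:ℝ) * |x^(m-1)|) := by
        rw [abs_mul, abs_mul, Nat.abs_cast]
    _ ≤ |c ν m| * (((m:ℝ)+1)^2 * R^m) := by
        apply mul_le_mul_of_nonneg_left _ (abs_nonneg _)
        apply mul_le_mul (le_trans (le_trans (le_abs_self _) (by rw [Nat.abs_cast])) h2) h1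
          (abs_nonneg _) (by positivity)
    _ = |c ν m| * ((m:ℝ)+1)^2 * R^m := by ring

lemma bound_g2 (hν : -1 < ν) {R : ℝ} (hR : 1 ≤ R) {x : ℝ} (hx : |x| ≤ R) (m : ℕ) :
    |c ν m * ((m:ℝ) * (((m:ℝ)-1) * x^(m-2)))| ≤ |c ν m| * (m+1)^2 * R^m := by
  have hR0 : (0:ℝ) < R := lt_of_lt_of_le one_pos hR
  have h1 : |x^(m-2)| ≤ R^m := by
    rw [abs_pow]
    calc |x|^(m-2) ≤ R^(m-2) := pow_le_pow_left₀ (abs_nonneg x) hx _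
      _ ≤ R^m := pow_le_pow_right₀ hR (Nat.sub_le m 2)
  have hm0 : (0:ℝ) ≤ m := Nat.cast_nonneg m
  have h3 : |(m:ℝ) * (((m:ℝ)-1) * x^(m-2))| ≤ ((m:ℝ)+1)^2 * R^m := by
    rw [abs_mul, abs_mul, Nat.abs_cast]
    have hm1 : |(m:ℝ)-1| ≤ (m:ℝ)+1 := by
      rw [abs_le]; constructor <;> linarith
    calc (m:ℝ) * (|(m:ℝ)-1| * |x^(m-2)|) ≤ ((m:ℝ)+1) * (((m:ℝ)+1) * R^m) := by
          apply mul_le_mul (by linarith) _ (by positivity) (by linarith)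
          exact mul_le_mul hm1 h1 (abs_nonneg _) (by linarith)
      _ = ((m:ℝ)+1)^2 * R^m := by ring
  calc |c ν m * ((m:ℝ) * (((m:ℝ)-1) * x^(m-2)))|
      = |c ν m| * |(m:ℝ) * (((m:ℝ)-1) * x^(m-2))| := abs_mul _ _
    _ ≤ |c ν m| * (((m:ℝ)+1)^2 * R^m) := mul_le_mul_of_nonneg_left h3 (abs_nonneg _)
    _ = |c ν m| * ((m:ℝ)+1)^2 * R^m := by ring

lemma summable_g0 (hν : -1 < ν) (t : ℝ) : Summable (fun m : ℕ => c ν m * t^m) :=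
  summable_of_master hν (le_max_left 1 (|t|)) (bound_g0 hν (le_max_left 1 (|t|)) (le_max_right _ _))
lemma summable_g1 (hν : -1 < ν) (t : ℝ) : Summable (fun m : ℕ => c ν m * ((m:ℝ) * t^(m-1))) :=
  summable_of_master hν (le_max_left 1 (|t|)) (bound_g1 hν (le_max_left 1 (|t|)) (le_max_right _ _))
lemma summable_g2 (hν : -1 < ν) (t : ℝ) :
    Summable (fun m : ℕ => c ν m * ((m:ℝ) * (((m:ℝ)-1) * t^(m-2)))) :=
  summable_of_master hν (le_max_left 1 (|t|)) (bound_g2 hν (le_max_left 1 (|t|)) (le_max_right _ _))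

lemma hasDerivAt_g0 (hν : -1 < ν) (t : ℝ) : HasDerivAt (g0 ν) (g1 ν t) t := by
  set R : ℝ := |t| + 1 with hRdef
  have hR : 1 ≤ R := by rw [hRdef]; linarith [abs_nonneg t]
  have hR0 : (0:ℝ) < R := lt_of_lt_of_le one_pos hR
  apply hasDerivAt_tsum_of_isPreconnected (master hν hR) (isOpen_Ioo (a := -R) (b := R))
      (convex_Ioo _ _).isPreconnected
      (g := fun m x => c ν m * x^m) (g' := fun m x => c ν m * ((m:ℝ) * x^(m-1)))
      (y₀ := 0)
  · intro m x _
    exact (hasDerivAt_pow m x).const_mul (c ν m)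
  · intro m x hx
    have hxR : |x| ≤ R := by
      rw [abs_le]; exact ⟨le_of_lt hx.1, le_of_lt hx.2⟩
    rw [Real.norm_eq_abs]; exact bound_g1 hν hR hxR m
  · rw [Set.mem_Ioo]; constructor <;> [linarith; linarith]
  · exact summable_g0 hν 0
  · rw [Set.mem_Ioo]
    constructor
    · linarith [neg_abs_le t]
    · linarith [le_abs_self t]

lemma hasDerivAt_g1 (hν : -1 < ν) (t : ℝ) : HasDerivAt (g1 ν) (g2 ν t) t := by
  set R : ℝ := |t| + 1 with hRdef
  have hR : 1 ≤ R := by rw [hRdef]; linarith [abs_nonneg t]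
  have hR0 : (0:ℝ) < R := lt_of_lt_of_le one_pos hR
  apply hasDerivAt_tsum_of_isPreconnected (master hν hR) (isOpen_Ioo (a := -R) (b := R))
      (convex_Ioo _ _).isPreconnected
      (g := fun m x => c ν m * ((m:ℝ) * x^(m-1)))
      (g' := fun m x => c ν m * ((m:ℝ) * (((m:ℝ)-1) * x^(m-2))))
      (y₀ := 0)
  · intro m x _
    match m with
    | 0 => simpa using (hasDerivAt_const x (0:ℝ))
    | (n+1) =>
      have h := ((hasDerivAt_pow n x).const_mul (c ν (n+1) * ((n:ℝ)+1)))
      have e1 : (fun x => c ν (n+1) * ((n:ℝ)+1) * x^n) =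
          (fun x => c ν (n+1) * (((n+1:ℕ):ℝ) * x^(n+1-1))) := by
        funext y; push_cast; ring
      have e2 : c ν (n+1) * ((n:ℝ)+1) * ((n:ℝ) * x^(n-1)) =
          c ν (n+1) * (((n+1:ℕ):ℝ) * ((((n+1:ℕ):ℝ)-1) * x^(n+1-2))) := by
        match n with
        | 0 => push_cast; ring
        | (k+1) => push_cast; ring
      rw [e1] at h; rw [← e2]; exact h
  · intro m x hx
    have hxR : |x| ≤ R := by
      rw [abs_le]; exact ⟨le_of_lt hx.1, le_of_lt hx.2⟩
    rw [Real.norm_eq_abs]; exact bound_g2 hν hR hxR m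
  · rw [Set.mem_Ioo]; constructor <;> [linarith; linarith]
  · exact summable_g1 hν 0
  · rw [Set.mem_Ioo]
    constructor
    · linarith [neg_abs_le t]
    · linarith [le_abs_self t]

/-- The hypergeometric-type ODE for the series. -/
lemma g_ode (hν : -1 < ν) (t : ℝ) :
    t * g2 ν t + (1+ν) * g1 ν t + g0 ν t / 4 = 0 := by
  have S0 := summable_g0 hν t
  have S1 := summable_g1 hν t
  have S2 := summable_g2 hν t
  -- t * g2 = ∑ c m * (m*(m-1)) * t^(m-1)
  have h2 : t * g2 ν t = ∑' m : ℕ, c ν m * ((m:ℝ) * (((m:ℝ)-1) * t^(m-1))) := by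
    rw [g2, ← tsum_mul_left]
    apply tsum_congr
    intro m
    match m with
    | 0 => simp
    | 1 => simp
    | (k+2) =>
      have : (k+2) - 1 = (k+1) := rfl
      rw [this]
      have : (k+2) - 2 = k := rfl
      rw [this, pow_succ]
      ring
  have S2' : Summable (fun m : ℕ => c ν m * ((m:ℝ) * (((m:ℝ)-1) * t^(m-1)))) := by
    apply summable_of_master hν (le_max_left 1 (|t|))
    intro m
    have hxR : |t| ≤ max 1 |t| := le_max_right _ _
    have hR : (1:ℝ) ≤ max 1 |t| := le_max_left _ _
    set R := max 1 |t|
    have h1 : |t^(m-1)| ≤ R^m := by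
      rw [abs_pow]
      calc |t|^(m-1) ≤ R^(m-1) := pow_le_pow_left₀ (abs_nonneg t) hxR _
        _ ≤ R^m := pow_le_pow_right₀ hR (Nat.sub_le m 1)
    have hm0 : (0:ℝ) ≤ m := Nat.cast_nonneg m
    have hm1 : |(m:ℝ)-1| ≤ (m:ℝ)+1 := by rw [abs_le]; constructor <;> linarith
    calc |c ν m * ((m:ℝ) * (((m:ℝ)-1) * t^(m-1)))|
        = |c ν m| * ((m:ℝ) * (|(m:ℝ)-1| * |t^(m-1)|)) := by
          rw [abs_mul, abs_mul, abs_mul, Nat.abs_cast]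
      _ ≤ |c ν m| * (((m:ℝ)+1) * (((m:ℝ)+1) * R^m)) := by
          apply mul_le_mul_of_nonneg_left _ (abs_nonneg _)
          apply mul_le_mul (by linarith) (mul_le_mul hm1 h1 (abs_nonneg _) (by linarith))
            (by positivity) (by linarith)
      _ = |c ν m| * ((m:ℝ)+1)^2 * R^m := by ring
  -- combine first two sums
  have h12 : t * g2 ν t + (1+ν) * g1 ν t
      = ∑' m : ℕ, c ν m * ((m:ℝ) * (((m:ℝ)+ν) * t^(m-1))) := by
    rw [h2, g1, ← tsum_mul_left, ← Summable.tsum_add S2' (S1.mul_left (1+ν))]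
    apply tsum_congr
    intro m
    ring
  have Se : Summable (fun m : ℕ => c ν m * ((m:ℝ) * (((m:ℝ)+ν) * t^(m-1)))) := by
    have := S2'.add (S1.mul_left (1+ν))
    apply Summable.congr this
    intro m; ring
  rw [h12, Summable.tsum_eq_zero_add Se]
  simp only [Nat.cast_zero, zero_mul, mul_zero, zero_add]
  have hshift : ∀ m : ℕ, c ν (m+1) * (((m+1:ℕ):ℝ) * ((((m+1:ℕ):ℝ)+ν) * t^((m+1)-1)))
      = -(c ν m * t^m) / 4 := by
    intro m
    have h4 : (0:ℝ) < 1 + ν + m := gamma_arg_pos hν m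
    have h5 : (0:ℝ) < (m:ℝ) + 1 := by positivity
    rw [c_rec hν m]
    have : (m+1) - 1 = m := rfl
    rw [this]
    push_cast
    field_simp
    ring
  rw [tsum_congr hshift]
  have : ∑' m : ℕ, -(c ν m * t^m) / 4 = -(g0 ν t)/4 := by
    rw [g0, ← tsum_neg]
    exact tsum_div_const
  rw [this]
  ring

/-- the normalized function u(x) = x^(ν+1/2) * g0(x²), and its first derivative. -/
noncomputable def uu (ν : ℝ) (x : ℝ) : ℝ := x ^ (ν + 1/2 : ℝ) * g0 ν (x^2)

noncomputable def uu1 (ν : ℝ) (x : ℝ) : ℝ :=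
  (ν + 1/2) * x ^ (ν + 1/2 - 1 : ℝ) * g0 ν (x^2) + x ^ (ν + 1/2 : ℝ) * (g1 ν (x^2) * (2*x))

lemma hasDerivAt_uu (hν : -1 < ν) {x : ℝ} (hx : 0 < x) :
    HasDerivAt (uu ν) (uu1 ν x) x := by
  have h1 : HasDerivAt (fun y : ℝ => y ^ (ν + 1/2 : ℝ)) ((ν + 1/2) * x ^ (ν + 1/2 - 1 : ℝ)) x :=
    Real.hasDerivAt_rpow_const (Or.inl hx.ne')
  have h2 : HasDerivAt (fun y : ℝ => g0 ν (y^2)) (g1 ν (x^2) * (2*x)) x := by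
    have hp : HasDerivAt (fun y : ℝ => y^2) ((2:ℕ) * x^(2-1)) x := hasDerivAt_pow 2 x
    have := (hasDerivAt_g0 hν (x^2)).comp x hp
    simpa [Function.comp_def] using this
  exact h1.mul h2

lemma hasDerivAt_uu1 (hν : -1 < ν) {x : ℝ} (hx : 0 < x) :
    HasDerivAt (uu1 ν) (-(1 + (1/4 - ν^2)/x^2) * uu ν x) x := by
  have hrp : ∀ p : ℝ, HasDerivAt (fun y : ℝ => y ^ (p : ℝ)) (p * x ^ (p - 1 : ℝ)) x :=
    fun p => Real.hasDerivAt_rpow_const (Or.inl hx.ne')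
  have hg0c : HasDerivAt (fun y : ℝ => g0 ν (y^2)) (g1 ν (x^2) * (2*x)) x := by
    have hp : HasDerivAt (fun y : ℝ => y^2) ((2:ℕ) * x^(2-1)) x := hasDerivAt_pow 2 x
    have := (hasDerivAt_g0 hν (x^2)).comp x hp
    simpa [Function.comp_def] using this
  have hg1c : HasDerivAt (fun y : ℝ => g1 ν (y^2)) (g2 ν (x^2) * (2*x)) x := by
    have hp : HasDerivAt (fun y : ℝ => y^2) ((2:ℕ) * x^(2-1)) x := hasDerivAt_pow 2 x
    have := (hasDerivAt_g1 hν (x^2)).comp x hp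
    simpa [Function.comp_def] using this
  have hid : HasDerivAt (fun y : ℝ => y) (1:ℝ) x := hasDerivAt_id x
  have hT1 : HasDerivAt (fun y : ℝ => (ν + 1/2) * y ^ (ν + 1/2 - 1 : ℝ) * g0 ν (y^2))
      ((ν + 1/2) * ((ν + 1/2 - 1) * x ^ (ν + 1/2 - 1 - 1 : ℝ)) * g0 ν (x^2)
        + (ν + 1/2) * x ^ (ν + 1/2 - 1 : ℝ) * (g1 ν (x^2) * (2*x))) x := by
    exact (((hrp (ν + 1/2 - 1)).const_mul (ν + 1/2)).mul hg0c)
  have hT2 : HasDerivAt (fun y : ℝ => y ^ (ν + 1/2 : ℝ) * (g1 ν (y^2) * (2*y)))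
      (((ν + 1/2) * x ^ (ν + 1/2 - 1 : ℝ)) * (g1 ν (x^2) * (2*x))
        + x ^ (ν + 1/2 : ℝ) * ((g2 ν (x^2) * (2*x)) * (2*x) + g1 ν (x^2) * 2)) x := by
    have hinner : HasDerivAt (fun y : ℝ => g1 ν (y^2) * (2*y))
        ((g2 ν (x^2) * (2*x)) * (2*x) + g1 ν (x^2) * 2) x := by
      have := hg1c.mul ((hid.const_mul (2:ℝ)))
      simpa [Pi.mul_def] using this
    exact (hrp (ν + 1/2)).mul hinner
  have hsum := hT1.add hT2
  have heq : (ν + 1/2) * ((ν + 1/2 - 1) * x ^ (ν + 1/2 - 1 - 1 : ℝ)) * g0 ν (x^2)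
        + (ν + 1/2) * x ^ (ν + 1/2 - 1 : ℝ) * (g1 ν (x^2) * (2*x))
        + (((ν + 1/2) * x ^ (ν + 1/2 - 1 : ℝ)) * (g1 ν (x^2) * (2*x))
        + x ^ (ν + 1/2 : ℝ) * ((g2 ν (x^2) * (2*x)) * (2*x) + g1 ν (x^2) * 2))
      = -(1 + (1/4 - ν^2)/x^2) * uu ν x := by
    have hx2 : (0:ℝ) < x^2 := by positivity
    have hode := g_ode hν (x^2)
    have hg2v : g2 ν (x^2) = (-((1+ν) * g1 ν (x^2) + g0 ν (x^2)/4))/(x^2) := by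
      field_simp
      linarith [hode]
    have e1 : x ^ (ν + 1/2 - 1 : ℝ) = x ^ (ν + 1/2 : ℝ) / x := by
      rw [Real.rpow_sub hx, Real.rpow_one]
    have e2 : x ^ (ν + 1/2 - 1 - 1 : ℝ) = x ^ (ν + 1/2 : ℝ) / x^2 := by
      rw [Real.rpow_sub hx, Real.rpow_sub hx, Real.rpow_one]
      rw [div_div, ← pow_two]
    rw [hg2v, e1, e2, uu]
    field_simp
    ring
  rw [heq] at hsum
  exact hsum

section Sturm

lemma left_deriv_nonneg {u : ℝ → ℝ} {d a b : ℝ} (hab : a < b)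
    (h : HasDerivAt u d a) (hua : u a = 0) (hupos : ∀ x ∈ Ioo a b, 0 < u x) : 0 ≤ d := by
  have h' := (h.hasDerivWithinAt (s := Ioi a))
  rw [hasDerivWithinAt_iff_tendsto_slope] at h'
  have hset : Ioi a \ {a} = Ioi a := Set.diff_singleton_eq_self (by simp)
  rw [hset] at h'
  refine ge_of_tendsto h' ?_
  filter_upwards [Ioo_mem_nhdsGT_of_mem (Set.mem_Ico.mpr ⟨le_refl a, hab⟩)] with x hx
  have h1 := hupos x hx
  have h2 : 0 < x - a := by have := hx.1; linarith
  rw [slope_def_field, hua]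
  simp only [sub_zero]
  positivity

lemma right_deriv_nonpos {u : ℝ → ℝ} {d a b : ℝ} (hab : a < b)
    (h : HasDerivAt u d b) (hub : u b = 0) (hupos : ∀ x ∈ Ioo a b, 0 < u x) : d ≤ 0 := by
  have h' := (h.hasDerivWithinAt (s := Iio b))
  rw [hasDerivWithinAt_iff_tendsto_slope] at h'
  have hset : Iio b \ {b} = Iio b := Set.diff_singleton_eq_self (by simp)
  rw [hset] at h'
  refine le_of_tendsto h' ?_
  filter_upwards [Ioo_mem_nhdsLT_of_mem (Set.mem_Ioc.mpr ⟨hab, le_refl b⟩)] with x hx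
  have h1 := hupos x hx
  have h2 : x - b < 0 := by have := hx.2; linarith
  rw [slope_def_field, hub]
  simp only [sub_zero]
  apply div_nonpos_of_nonneg_of_nonpos h1.le h2.le

lemma cont_limit_nonneg {v : ℝ → ℝ} {a b : ℝ} (hab : a < b)
    (h : ContinuousAt v a) (hvpos : ∀ x ∈ Ioo a b, 0 < v x) : 0 ≤ v a := by
  have h' : Tendsto v (𝓝[Ioi a] a) (𝓝 (v a)) :=
    (h.continuousWithinAt).tendsto
  refine ge_of_tendsto h' ?_
  filter_upwards [Ioo_mem_nhdsGT_of_mem (Set.mem_Ico.mpr ⟨le_refl a, hab⟩)] with x hx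
  exact (hvpos x hx).le

lemma cont_limit_nonneg' {v : ℝ → ℝ} {a b : ℝ} (hab : a < b)
    (h : ContinuousAt v b) (hvpos : ∀ x ∈ Ioo a b, 0 < v x) : 0 ≤ v b := by
  have h' : Tendsto v (𝓝[Iio b] b) (𝓝 (v b)) :=
    (h.continuousWithinAt).tendsto
  refine ge_of_tendsto h' ?_
  filter_upwards [Ioo_mem_nhdsLT_of_mem (Set.mem_Ioc.mpr ⟨hab, le_refl b⟩)] with x hx
  exact (hvpos x hx).le

lemma sturm_core {u v u' v' p P : ℝ → ℝ} {a b : ℝ} (hab : a < b)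
    (hu : ∀ x ∈ Icc a b, HasDerivAt u (u' x) x)
    (hu' : ∀ x ∈ Icc a b, HasDerivAt u' (-(p x) * u x) x)
    (hv : ∀ x ∈ Icc a b, HasDerivAt v (v' x) x)
    (hv' : ∀ x ∈ Icc a b, HasDerivAt v' (-(P x) * v x) x)
    (hpP : ∀ x ∈ Ioo a b, p x < P x)
    (hua : u a = 0) (hub : u b = 0)
    (hupos : ∀ x ∈ Ioo a b, 0 < u x)
    (hvpos : ∀ x ∈ Ioo a b, 0 < v x) : False := by
  set W : ℝ → ℝ := fun x => u x * v' x - u' x * v x with hW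
  have hWd : ∀ x ∈ Icc a b, HasDerivAt W ((p x - P x) * (u x * v x)) x := by
    intro x hx
    have h := ((hu x hx).mul (hv' x hx)).sub ((hu' x hx).mul (hv x hx))
    refine h.congr_deriv ?_
    ring
  have hWc : ContinuousOn W (Icc a b) :=
    fun x hx => ((hWd x hx).continuousAt).continuousWithinAt
  have hanti : StrictAntiOn W (Icc a b) := by
    apply strictAntiOn_of_deriv_neg (convex_Icc a b) hWc
    intro x hx
    rw [interior_Icc] at hx
    rw [(hWd x (Ioo_subset_Icc_self hx)).deriv]
    have h1 := hupos x hx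
    have h2 := hvpos x hx
    have h3 := hpP x hx
    have : p x - P x < 0 := by linarith
    exact mul_neg_of_neg_of_pos this (by positivity)
  have hWab : W b < W a :=
    hanti (Set.mem_Icc.mpr ⟨le_refl a, hab.le⟩) (Set.mem_Icc.mpr ⟨hab.le, le_refl b⟩) hab
  have haI : a ∈ Icc a b := Set.mem_Icc.mpr ⟨le_refl a, hab.le⟩
  have hbI : b ∈ Icc a b := Set.mem_Icc.mpr ⟨hab.le, le_refl b⟩
  have hu'a : 0 ≤ u' a := left_deriv_nonneg hab (hu a haI) hua hupos
  have hu'b : u' b ≤ 0 := right_deriv_nonpos hab (hu b hbI) hub hupos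
  have hva : 0 ≤ v a := cont_limit_nonneg hab (hv a haI).continuousAt hvpos
  have hvb : 0 ≤ v b := cont_limit_nonneg' hab (hv b hbI).continuousAt hvpos
  have hWa : W a ≤ 0 := by
    simp only [hW, hua, zero_mul, zero_sub, neg_nonpos]
    exact mul_nonneg hu'a hva
  have hWb : 0 ≤ W b := by
    simp only [hW, hub, zero_mul, zero_sub, neg_nonneg]
    exact mul_nonpos_of_nonpos_of_nonneg hu'b hvb
  linarith

/-- Sturm comparison: if `u'' = -p u`, `v'' = -P v` with `p < P` on `(a,b)`, and `u`
vanishes at `a`, `b` but not in between, then `v` vanishes somewhere in `(a,b)`. -/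
lemma sturm {u v u' v' p P : ℝ → ℝ} {a b : ℝ} (hab : a < b)
    (hu : ∀ x ∈ Icc a b, HasDerivAt u (u' x) x)
    (hu' : ∀ x ∈ Icc a b, HasDerivAt u' (-(p x) * u x) x)
    (hv : ∀ x ∈ Icc a b, HasDerivAt v (v' x) x)
    (hv' : ∀ x ∈ Icc a b, HasDerivAt v' (-(P x) * v x) x)
    (hpP : ∀ x ∈ Ioo a b, p x < P x)
    (hua : u a = 0) (hub : u b = 0)
    (hune : ∀ x ∈ Ioo a b, u x ≠ 0) :
    ∃ x ∈ Ioo a b, v x = 0 := by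
  by_contra hcon
  push_neg at hcon
  -- sign of u is constant
  have hmid : (a+b)/2 ∈ Ioo a b := ⟨by linarith, by linarith⟩
  have hsign : ∀ (w : ℝ → ℝ), ContinuousOn w (Icc a b) → (∀ x ∈ Ioo a b, w x ≠ 0) →
      0 < w ((a+b)/2) → ∀ x ∈ Ioo a b, 0 < w x := by
    intro w hwc hwne hw0 x hx
    rcases lt_trichotomy (w x) 0 with h|h|h
    · exfalso
      rcases lt_trichotomy x ((a+b)/2) with hlt|heq|hgt
      · have hcc : ContinuousOn w (Icc x ((a+b)/2)) :=
          hwc.mono (Icc_subset_Icc hx.1.le hmid.2.le)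
        have : (0:ℝ) ∈ Ioo (w x) (w ((a+b)/2)) := ⟨h, hw0⟩
        obtain ⟨y, hy, hy0⟩ := intermediate_value_Ioo hlt.le hcc this
        exact hwne y ⟨lt_trans hx.1 hy.1, lt_trans hy.2 hmid.2⟩ hy0
      · rw [heq] at h; linarith
      · have hcc : ContinuousOn w (Icc ((a+b)/2) x) :=
          hwc.mono (Icc_subset_Icc hmid.1.le hx.2.le)
        have : (0:ℝ) ∈ Ioo (w x) (w ((a+b)/2)) := ⟨h, hw0⟩
        obtain ⟨y, hy, hy0⟩ := intermediate_value_Ioo' hgt.le hcc this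
        exact hwne y ⟨lt_trans hmid.1 hy.1, lt_trans hy.2 hx.2⟩ hy0
    · exact absurd h (hwne x hx)
    · exact h
  have hucont : ContinuousOn u (Icc a b) := fun x hx => ((hu x hx).continuousAt).continuousWithinAt
  have hvcont : ContinuousOn v (Icc a b) := fun x hx => ((hv x hx).continuousAt).continuousWithinAt
  have hvne : ∀ x ∈ Ioo a b, v x ≠ 0 := fun x hx h => hcon x hx h
  rcases lt_trichotomy (u ((a+b)/2)) 0 with hu0|hu0|hu0
  · -- u negative: use -u
    rcases lt_trichotomy (v ((a+b)/2)) 0 with hv0|hv0|hv0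
    · exact sturm_core hab (fun x hx => (hu x hx).neg) (fun x hx => by
          have := (hu' x hx).neg
          have e : -(-(p x) * u x) = -(p x) * (-(u x)) := by ring
          rw [e] at this; exact this)
        (fun x hx => (hv x hx).neg) (fun x hx => by
          have := (hv' x hx).neg
          have e : -(-(P x) * v x) = -(P x) * (-(v x)) := by ring
          rw [e] at this; exact this)
        hpP (by simp [hua]) (by simp [hub])
        (hsign (fun y => -u y) hucont.neg (fun x hx h => hune x hx (by simpa [neg_eq_zero] using h)) (by show 0 < -u ((a+b)/2); linarith))
        (hsign (fun y => -v y) hvcont.neg (fun x hx h => hvne x hx (by simpa [neg_eq_zero] using h)) (by show 0 < -v ((a+b)/2); linarith))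
    · exact absurd hv0 (hvne _ hmid)
    · exact sturm_core hab (fun x hx => (hu x hx).neg) (fun x hx => by
          have := (hu' x hx).neg
          have e : -(-(p x) * u x) = -(p x) * (-(u x)) := by ring
          rw [e] at this; exact this)
        (hv) (hv') hpP (by simp [hua]) (by simp [hub])
        (hsign (fun y => -u y) hucont.neg (fun x hx h => hune x hx (by simpa [neg_eq_zero] using h)) (by show 0 < -u ((a+b)/2); linarith))
        (hsign v hvcont hvne hv0)
  · exact absurd hu0 (hune _ hmid)
  · rcases lt_trichotomy (v ((a+b)/2)) 0 with hv0|hv0|hv0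
    · exact sturm_core hab hu hu' (fun x hx => (hv x hx).neg) (fun x hx => by
          have := (hv' x hx).neg
          have e : -(-(P x) * v x) = -(P x) * (-(v x)) := by ring
          rw [e] at this; exact this)
        hpP hua hub (hsign u hucont hune hu0)
        (hsign (fun y => -v y) hvcont.neg (fun x hx h => hvne x hx (by simpa [neg_eq_zero] using h)) (by show 0 < -v ((a+b)/2); linarith))
    · exact absurd hv0 (hvne _ hmid)
    · exact sturm_core hab hu hu' hv hv' hpP hua hub (hsign u hucont hune hu0)
        (hsign v hvcont hvne hv0)

end Sturm

lemma hasDerivAt_sin_comp (ω z x : ℝ) :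
    HasDerivAt (fun y => Real.sin (ω * (y - z))) (ω * Real.cos (ω * (x - z))) x := by
  have h1 : HasDerivAt (fun y : ℝ => ω * (y - z)) ω x := by
    simpa using ((hasDerivAt_id x).sub_const z).const_mul ω
  have := (Real.hasDerivAt_sin (ω * (x - z))).comp x h1
  simpa [mul_comm, Function.comp_def] using this

lemma hasDerivAt_cos_comp (ω z x : ℝ) :
    HasDerivAt (fun y => ω * Real.cos (ω * (y - z))) (-(ω^2) * Real.sin (ω * (x - z))) x := by
  have h1 : HasDerivAt (fun y : ℝ => ω * (y - z)) ω x := by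
    simpa using ((hasDerivAt_id x).sub_const z).const_mul ω
  have h := ((Real.hasDerivAt_cos (ω * (x - z))).comp x h1).const_mul ω
  refine h.congr_deriv ?_
  ring

/-- If the potential exceeds ω² just right of a zero `a` of `u`, then `u` has
another zero within distance `π/ω`. -/
lemma zero_in_of_q_gt {u u1 : ℝ → ℝ} {κ a ω : ℝ} (ha : 0 < a) (hω : 0 < ω)
    (hu : ∀ x, 0 < x → HasDerivAt u (u1 x) x)
    (hu1 : ∀ x, 0 < x → HasDerivAt u1 (-(1 + κ/x^2) * u x) x)
    (hua : u a = 0)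
    (hq : ∀ x ∈ Ioo a (a + π/ω), ω^2 < 1 + κ/x^2) :
    ∃ x ∈ Ioo a (a + π/ω), u x = 0 := by
  have hπω : 0 < π/ω := div_pos Real.pi_pos hω
  have hend : ω * (a + π/ω - a) = π := by field_simp; ring
  apply sturm (u := fun y => Real.sin (ω*(y-a))) (u' := fun y => ω * Real.cos (ω*(y-a)))
    (v := u) (v' := u1) (p := fun _ => ω^2) (P := fun x => 1 + κ/x^2)
    (by linarith : a < a + π/ω)
  · exact fun x _ => hasDerivAt_sin_comp ω a x
  · exact fun x _ => hasDerivAt_cos_comp ω a x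
  · exact fun x hx => hu x (lt_of_lt_of_le ha hx.1)
  · exact fun x hx => hu1 x (lt_of_lt_of_le ha hx.1)
  · exact hq
  · simp
  · rw [hend]; exact Real.sin_pi
  · intro x hx
    have h1 : 0 < ω * (x - a) := by
      have := hx.1; apply mul_pos hω; linarith
    have h2 : ω * (x - a) < π := by
      have := hx.2
      calc ω * (x - a) < ω * (π/ω) := by
            apply mul_lt_mul_of_pos_left _ hω
            linarith
        _ = π := by field_simp
    exact (Real.sin_pos_of_pos_of_lt_pi h1 h2).ne'

/-- If the potential is below ω² between consecutive zeros `a < b` of `u`,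
then the gap exceeds `π/ω`. -/
lemma gap_gt_of_q_lt {u u1 : ℝ → ℝ} {κ a b ω : ℝ} (ha : 0 < a) (hab : a < b) (hω : 0 < ω)
    (hu : ∀ x, 0 < x → HasDerivAt u (u1 x) x)
    (hu1 : ∀ x, 0 < x → HasDerivAt u1 (-(1 + κ/x^2) * u x) x)
    (hua : u a = 0) (hub : u b = 0) (hune : ∀ x ∈ Ioo a b, u x ≠ 0)
    (hq : ∀ x ∈ Ioo a b, 1 + κ/x^2 < ω^2) : π/ω < b - a := by
  obtain ⟨x, hx, hx0⟩ := sturm (u := u) (u' := u1)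
    (v := fun y => Real.sin (ω*(y-a))) (v' := fun y => ω * Real.cos (ω*(y-a)))
    (p := fun x => 1 + κ/x^2) (P := fun _ => ω^2) hab
    (fun x hx => hu x (lt_of_lt_of_le ha hx.1))
    (fun x hx => hu1 x (lt_of_lt_of_le ha hx.1))
    (fun x _ => hasDerivAt_sin_comp ω a x)
    (fun x _ => hasDerivAt_cos_comp ω a x)
    hq hua hub hune
  obtain ⟨k, hk⟩ := Real.sin_eq_zero_iff.mp hx0
  have h1 : 0 < ω * (x - a) := by have := hx.1; apply mul_pos hω; linarith
  have hk1 : (1:ℤ) ≤ k := by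
    by_contra hcon
    push_neg at hcon
    have : (k:ℝ) ≤ 0 := by exact_mod_cast Int.lt_add_one_iff.mp (by linarith [hcon])
    nlinarith [Real.pi_pos]
  have hge : π/ω ≤ x - a := by
    rw [div_le_iff₀ hω]
    have : (1:ℝ) * π ≤ (k:ℝ) * π := by
      apply mul_le_mul_of_nonneg_right _ Real.pi_pos.le
      exact_mod_cast hk1
    rw [hk] at this
    linarith [this]
  have := hx.2
  linarith

/-- Shifted Sturm comparison: for a strictly increasing potential (κ < 0), the gap to the
next zero after `b` is less than `b - a`. -/
lemma shift_step {u u1 : ℝ → ℝ} {κ a b : ℝ} (hκ : κ < 0) (ha : 0 < a) (hab : a < b)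
    (hu : ∀ x, 0 < x → HasDerivAt u (u1 x) x)
    (hu1 : ∀ x, 0 < x → HasDerivAt u1 (-(1 + κ/x^2) * u x) x)
    (hua : u a = 0) (hub : u b = 0) (hune : ∀ x ∈ Ioo a b, u x ≠ 0) :
    ∃ x ∈ Ioo b (b + (b - a)), u x = 0 := by
  set δ : ℝ := b - a with hδ
  have hδpos : 0 < δ := by rw [hδ]; linarith
  apply sturm (u := fun y => u (y - δ)) (u' := fun y => u1 (y - δ)) (v := u) (v' := u1)
    (p := fun x => 1 + κ/(x-δ)^2) (P := fun x => 1 + κ/x^2) (show b < b + δ by linarith)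
  · intro x hx
    have hx1 : 0 < x - δ := by have := hx.1; rw [hδ] at *; linarith
    have h := (hu (x-δ) hx1).comp x ((hasDerivAt_id x).sub_const δ)
    simpa [Function.comp_def] using h
  · intro x hx
    have hx1 : 0 < x - δ := by have := hx.1; rw [hδ] at *; linarith
    have h := (hu1 (x-δ) hx1).comp x ((hasDerivAt_id x).sub_const δ)
    simpa [Function.comp_def] using h
  · exact fun x hx => hu x (lt_of_lt_of_le (lt_trans ha hab) hx.1)
  · exact fun x hx => hu1 x (lt_of_lt_of_le (lt_trans ha hab) hx.1)
  · intro x hx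
    have hx1 : 0 < x := lt_trans (lt_trans ha hab) hx.1
    have hx2 : 0 < x - δ := by have := hx.1; rw [hδ] at *; linarith
    have hlt : x - δ < x := by linarith
    have h : κ/(x-δ)^2 < κ/x^2 := by
      rw [div_lt_div_iff₀ (by positivity) (by positivity)]
      have hsq : (x-δ)^2 < x^2 := by nlinarith
      exact mul_lt_mul_of_neg_left hsq hκ
    show 1 + κ/(x-δ)^2 < 1 + κ/x^2
    linarith
  · have e : b - δ = a := by rw [hδ]; ring
    rw [e]; exact hua
  · have e : b + δ - δ = b := by ring
    rw [e]; exact hub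
  · intro x hx
    have h1 : a < x - δ := by have := hx.1; rw [hδ] at *; linarith
    have h2 : x - δ < b := by have := hx.2; linarith
    exact hune (x - δ) ⟨h1, h2⟩

/-- Shifted Sturm comparison, increasing-gap case (κ > 0). -/
lemma shift_step_inc {u u1 : ℝ → ℝ} {κ a b c : ℝ} (hκ : 0 < κ) (ha : 0 < a) (hab : a < b)
    (hbc : b < c)
    (hu : ∀ x, 0 < x → HasDerivAt u (u1 x) x)
    (hu1 : ∀ x, 0 < x → HasDerivAt u1 (-(1 + κ/x^2) * u x) x)
    (hub : u b = 0) (huc : u c = 0) (hune : ∀ x ∈ Ioo b c, u x ≠ 0) :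
    ∃ x ∈ Ioo b c, u (x - (b - a)) = 0 := by
  set δ : ℝ := b - a with hδ
  have hδpos : 0 < δ := by rw [hδ]; linarith
  apply sturm (u := u) (u' := u1) (v := fun y => u (y - δ)) (v' := fun y => u1 (y - δ))
    (p := fun x => 1 + κ/x^2) (P := fun x => 1 + κ/(x-δ)^2) hbc
  · exact fun x hx => hu x (lt_trans ha (lt_of_lt_of_le (by linarith) hx.1))
  · exact fun x hx => hu1 x (lt_trans ha (lt_of_lt_of_le (by linarith) hx.1))
  · intro x hx
    have hx1 : 0 < x - δ := by have := hx.1; rw [hδ] at *; linarith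
    have h := (hu (x-δ) hx1).comp x ((hasDerivAt_id x).sub_const δ)
    simpa [Function.comp_def] using h
  · intro x hx
    have hx1 : 0 < x - δ := by have := hx.1; rw [hδ] at *; linarith
    have h := (hu1 (x-δ) hx1).comp x ((hasDerivAt_id x).sub_const δ)
    simpa [Function.comp_def] using h
  · intro x hx
    have hx1 : 0 < x := lt_trans (lt_trans ha hab) hx.1
    have hx2 : 0 < x - δ := by have := hx.1; rw [hδ] at *; linarith
    have hlt : x - δ < x := by linarith
    have h : κ/x^2 < κ/(x-δ)^2 := by
      rw [div_lt_div_iff₀ (by positivity) (by positivity)]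
      have hsq : (x-δ)^2 < x^2 := by nlinarith
      exact mul_lt_mul_of_pos_left hsq hκ
    show 1 + κ/x^2 < 1 + κ/(x-δ)^2
    linarith
  · exact hub
  · exact huc
  · exact hune

/-- For κ = 0 the equation is u'' = -u; solutions through a zero are multiples of sin. -/
lemma exact_sol {u u1 : ℝ → ℝ}
    (hu : ∀ x, 0 < x → HasDerivAt u (u1 x) x)
    (hu1 : ∀ x, 0 < x → HasDerivAt u1 (-(u x)) x)
    {z : ℝ} (hz : 0 < z) (huz : u z = 0) :
    ∀ x, 0 < x → u x = u1 z * Real.sin (x - z) := by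
  set A : ℝ := u1 z with hA
  set w : ℝ → ℝ := fun x => u x - A * Real.sin (x - z) with hw
  set w1 : ℝ → ℝ := fun x => u1 x - A * Real.cos (x - z) with hw1
  have hsd : ∀ x : ℝ, HasDerivAt (fun y => A * Real.sin (y - z)) (A * Real.cos (x - z)) x := by
    intro x
    have h := ((Real.hasDerivAt_sin (x-z)).comp x ((hasDerivAt_id x).sub_const z)).const_mul A
    simpa using h
  have hcd : ∀ x : ℝ, HasDerivAt (fun y => A * Real.cos (y - z)) (-(A * Real.sin (x - z))) x := by
    intro x
    have h := ((Real.hasDerivAt_cos (x-z)).comp x ((hasDerivAt_id x).sub_const z)).const_mul A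
    refine h.congr_deriv ?_
    ring
  have hwd : ∀ x, 0 < x → HasDerivAt w (w1 x) x := fun x hx => (hu x hx).sub (hsd x)
  have hw1d : ∀ x, 0 < x → HasDerivAt w1 (-(w x)) x := by
    intro x hx
    have h := (hu1 x hx).sub (hcd x)
    refine h.congr_deriv ?_
    simp [hw]
    ring
  set E : ℝ → ℝ := fun x => w x * w x + w1 x * w1 x with hE
  have hEd : ∀ x, 0 < x → HasDerivAt E 0 x := by
    intro x hx
    have h := ((hwd x hx).mul (hwd x hx)).add ((hw1d x hx).mul (hw1d x hx))
    refine h.congr_deriv ?_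
    ring
  have hEconst : ∀ x, 0 < x → E x = E z := by
    intro x hx
    rcases le_or_gt x z with h|h
    · have hc := constant_of_has_deriv_right_zero (f := E) (a := x) (b := z)
        (fun y hy => (hEd y (lt_of_lt_of_le hx hy.1)).continuousAt.continuousWithinAt)
        (fun y hy => ((hEd y (lt_of_lt_of_le hx hy.1)).hasDerivWithinAt))
      exact (hc z ⟨h, le_refl z⟩).symm
    · have hc := constant_of_has_deriv_right_zero (f := E) (a := z) (b := x)
        (fun y hy => (hEd y (lt_of_lt_of_le hz hy.1)).continuousAt.continuousWithinAt)
        (fun y hy => ((hEd y (lt_of_lt_of_le hz hy.1)).hasDerivWithinAt))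
      exact hc x ⟨h.le, le_refl x⟩
  have hEz : E z = 0 := by
    simp [hE, hw, hw1, huz, hA]
  intro x hx
  have h := hEconst x hx
  rw [hEz] at h
  have hwx : w x = 0 := by
    have h1 : w x * w x + w1 x * w1 x = 0 := h
    nlinarith [sq_nonneg (w x), sq_nonneg (w1 x)]
  have := hwx
  rw [hw] at this
  simp at this
  linarith [this]

end BG

set_option maxHeartbeats 2000000 in
/-- For the positive zeros `j₁ < j₂ < ⋯` of the Bessel function `J_ν` (ν > −1),
the difference sequence `(j_{n+1} − j_n)` converges to π; it is strictly decreasing if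
`|ν| > 1/2`, strictly increasing if `|ν| < 1/2`, and constant if `|ν| = 1/2`. -/
theorem bessel_zero_gaps
    (ν : ℝ) (hν : -1 < ν)
    (J : ℝ → ℝ)
    (hJ : ∀ x : ℝ, 0 < x →
      J x = ∑' m : ℕ, ((-1 : ℝ) ^ m / (m.factorial * Real.Gamma (1 + ν + m))) *
        (x / 2) ^ (2 * (m : ℝ) + ν))
    (j : ℕ → ℝ)
    (hmono : ∀ n, 1 ≤ n → ∀ m, 1 ≤ m → n < m → j n < j m)
    (hpos : ∀ n, 1 ≤ n → 0 < j n)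
    (hzero : ∀ n, 1 ≤ n → J (j n) = 0)
    (hall : ∀ x : ℝ, 0 < x → J x = 0 → ∃ n, 1 ≤ n ∧ j n = x) :
    Tendsto (fun n : ℕ => j (n + 1) - j n) atTop (nhds Real.pi) ∧
    (1 / 2 < |ν| → ∀ n, 1 ≤ n → ∀ m, 1 ≤ m → n < m →
      j (m + 1) - j m < j (n + 1) - j n) ∧
    (|ν| < 1 / 2 → ∀ n, 1 ≤ n → ∀ m, 1 ≤ m → n < m →
      j (n + 1) - j n < j (m + 1) - j m) ∧
    (|ν| = 1 / 2 → ∀ n, 1 ≤ n → ∀ m, 1 ≤ m →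
      j (n + 1) - j n = j (m + 1) - j m) := by
  classical
  have hπ := Real.pi_pos
  set κ : ℝ := 1/4 - ν^2 with hκ
  obtain ⟨U, U1, hUd, hU1d, hUzero'⟩ :
      ∃ U U1 : ℝ → ℝ, (∀ x : ℝ, 0 < x → HasDerivAt U (U1 x) x) ∧
        (∀ x : ℝ, 0 < x → HasDerivAt U1 (-(1 + κ/x^2) * U x) x) ∧
        (∀ x : ℝ, 0 < x → ((x/2)^(ν:ℝ) * BG.g0 ν (x^2) = 0 ↔ U x = 0)) := by
    refine ⟨BG.uu ν, BG.uu1 ν, fun x hx => BG.hasDerivAt_uu hν hx, ?_, ?_⟩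
    · intro x hx
      have h := BG.hasDerivAt_uu1 hν hx
      rw [hκ]
      exact h
    · intro x hx
      rw [BG.uu]
      have h1 : (0:ℝ) < (x/2)^(ν:ℝ) := Real.rpow_pos_of_pos (by linarith) _
      have h2 : (0:ℝ) < x^(ν+1/2 : ℝ) := Real.rpow_pos_of_pos hx _
      constructor
      · intro h
        rcases mul_eq_zero.mp h with h'|h'
        · exact absurd h' h1.ne'
        · rw [h', mul_zero]
      · intro h
        rcases mul_eq_zero.mp h with h'|h'
        · exact absurd h' h2.ne'
        · rw [h', mul_zero]
  -- J in closed form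
  have hJg : ∀ x : ℝ, 0 < x → J x = (x/2)^(ν:ℝ) * BG.g0 ν (x^2) := by
    intro x hx
    rw [hJ x hx, BG.g0, ← tsum_mul_left]
    apply tsum_congr
    intro m
    have hx2 : (0:ℝ) < x/2 := by linarith
    have e1 : (x/2 : ℝ) ^ (2*(m:ℝ) + ν) = ((x/2)^(2*m : ℕ) : ℝ) * (x/2)^(ν:ℝ) := by
      rw [Real.rpow_add hx2, ← Real.rpow_natCast (x/2) (2*m)]
      push_cast
      ring_nf
    rw [e1, pow_mul, BG.c]
    have h2 : (0:ℝ) < (m.factorial : ℝ) := by exact_mod_cast m.factorial_pos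
    have h3 := BG.gamma_pos hν m
    have h4 : (0:ℝ) < (4:ℝ)^m := by positivity
    have e2 : ((x/2)^2 : ℝ)^m = (x^2)^m / 4^m := by
      rw [← div_pow]; congr 1; ring
    rw [e2]
    field_simp
  have hUzero : ∀ x : ℝ, 0 < x → (J x = 0 ↔ U x = 0) := by
    intro x hx
    rw [hJg x hx]
    exact hUzero' x hx
  have hz : ∀ n, 1 ≤ n → U (j n) = 0 := fun n hn => (hUzero (j n) (hpos n hn)).mp (hzero n hn)
  have hmono' : ∀ n, 1 ≤ n → ∀ m, n ≤ m → j n ≤ j m := by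
    intro n hn m hnm
    rcases eq_or_lt_of_le hnm with rfl|h
    · exact le_refl _
    · exact (hmono n hn m (le_trans hn hnm) h).le
  have hnext : ∀ n, 1 ≤ n → ∀ x, j n < x → U x = 0 → j (n+1) ≤ x := by
    intro n hn x hjx hx0
    have hxpos : 0 < x := lt_trans (hpos n hn) hjx
    obtain ⟨m, hm, hjm⟩ := hall x hxpos ((hUzero x hxpos).mpr hx0)
    have hnm : n < m := by
      by_contra hcon
      push_neg at hcon
      have := hmono' m hm n hcon
      rw [hjm] at this
      linarith
    calc j (n+1) ≤ j m := hmono' (n+1) (by omega) m hnm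
      _ = x := hjm
  have hne : ∀ n, 1 ≤ n → ∀ x ∈ Set.Ioo (j n) (j (n+1)), U x ≠ 0 := by
    intro n hn x hx h0
    have := hnext n hn x hx.1 h0
    linarith [hx.2]
  have hgap0 : ∀ n, 1 ≤ n → 0 < j (n+1) - j n := fun n hn => by
    have := hmono n hn (n+1) (by omega) (by omega)
    linarith
  have hB := hpos 1 le_rfl
  -- uniform upper bound for the potential on [j 1, ∞)
  obtain ⟨ω₀, hω₀, hω₀q⟩ : ∃ ω : ℝ, 0 < ω ∧ ∀ x : ℝ, j 1 ≤ x → 1 + κ/x^2 < ω^2 := by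
    refine ⟨Real.sqrt (2 + |κ|/(j 1)^2), Real.sqrt_pos.mpr (by positivity), ?_⟩
    intro x hxB
    rw [Real.sq_sqrt (by positivity)]
    have hx0 : 0 < x := lt_of_lt_of_le hB hxB
    have h1 : κ/x^2 ≤ |κ|/x^2 := by gcongr; exact le_abs_self κ
    have h2 : |κ|/x^2 ≤ |κ|/(j 1)^2 := by
      gcongr
    linarith

  have hgapLB : ∀ n, 1 ≤ n → π/ω₀ < j (n+1) - j n := by
    intro n hn
    apply BG.gap_gt_of_q_lt (hpos n hn) (by linarith [hgap0 n hn]) hω₀ hUd hU1d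
      (hz n hn) (hz (n+1) (by omega)) (hne n hn)
    intro x hx
    exact hω₀q x (le_trans (hmono' 1 le_rfl n hn) hx.1.le)
  have hπω₀ : 0 < π/ω₀ := div_pos hπ hω₀
  have hjlb : ∀ k : ℕ, j 1 + k * (π/ω₀) ≤ j (k+1) := by
    intro k
    induction k with
    | zero => simp
    | succ k ih =>
      have h := hgapLB (k+1) (by omega)
      push_cast
      push_cast at ih
      linarith
  have hjtop : ∀ A : ℝ, ∃ N : ℕ, 1 ≤ N ∧ ∀ n, N ≤ n → A ≤ j n := by
    intro A
    obtain ⟨k, hk⟩ := exists_nat_ge ((A - j 1)/(π/ω₀))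
    refine ⟨k+1, by omega, ?_⟩
    intro n hn
    rw [div_le_iff₀ hπω₀] at hk
    calc A ≤ j 1 + k*(π/ω₀) := by linarith
      _ ≤ j (k+1) := hjlb k
      _ ≤ j n := hmono' (k+1) (by omega) n hn
  constructor
  · -- tendsto π
    rw [Metric.tendsto_atTop]
    intro ε hε
    set ε' := min ε (π/2) with hε'def
    have hε'pos : 0 < ε' := lt_min hε (by linarith)
    have hε'le : ε' ≤ ε := min_le_left _ _
    have hε'lt : ε' < π := lt_of_le_of_lt (min_le_right _ _) (by linarith)
    set ω₁ : ℝ := π/(π+ε) with hω₁def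
    set ω₂ : ℝ := π/(π-ε') with hω₂def
    have hω₁pos : 0 < ω₁ := div_pos hπ (by linarith)
    have hω₂pos : 0 < ω₂ := div_pos hπ (by linarith)
    have hω₁lt : ω₁ < 1 := by rw [hω₁def, div_lt_one (by linarith)]; linarith
    have hω₂gt : 1 < ω₂ := by rw [hω₂def, lt_div_iff₀ (by linarith)]; linarith
    have hd1 : 0 < 1 - ω₁^2 := by nlinarith
    have hd2 : 0 < ω₂^2 - 1 := by nlinarith
    set δ₀ : ℝ := min (1 - ω₁^2) (ω₂^2 - 1) with hδ₀def
    have hδ₀pos : 0 < δ₀ := lt_min hd1 hd2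
    set A : ℝ := Real.sqrt (|κ|/δ₀) + 1 with hAdef
    have hA : ∀ x : ℝ, A ≤ x → |κ|/x^2 < δ₀ := by
      intro x hx
      have hs : 0 ≤ |κ|/δ₀ := by positivity
      have hsx : Real.sqrt (|κ|/δ₀) < x := by
        have := Real.sqrt_nonneg (|κ|/δ₀); rw [hAdef] at hx; linarith
      have hx0 : 0 < x := lt_of_le_of_lt (Real.sqrt_nonneg _) hsx
      have h2 : |κ|/δ₀ < x^2 := by
        nlinarith [Real.sq_sqrt hs, Real.sqrt_nonneg (|κ|/δ₀)]
      rw [div_lt_iff₀ (by positivity)]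
      rw [div_lt_iff₀ hδ₀pos] at h2
      nlinarith
    obtain ⟨N, hN1, hN⟩ := hjtop A
    refine ⟨N, ?_⟩
    intro n hn
    have hn1 : 1 ≤ n := le_trans hN1 hn
    have hjnA : A ≤ j n := hN n hn
    have hjn0 : 0 < j n := hpos n hn1
    -- upper bound: gap < π/ω₁ = π + ε
    have hup : j (n+1) - j n < π + ε := by
      have hq1 : ∀ x ∈ Set.Ioo (j n) (j n + π/ω₁), ω₁^2 < 1 + κ/x^2 := by
        intro x hx
        have hxA : A ≤ x := le_trans hjnA hx.1.le
        have hκx := hA x hxA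
        have hx0' : (0:ℝ) < x := lt_trans hjn0 hx.1
        have h3 : -(|κ|/x^2) ≤ κ/x^2 := by
          rw [← neg_div]
          gcongr
          exact neg_abs_le κ
        have h4 : |κ|/x^2 < 1 - ω₁^2 := lt_of_lt_of_le hκx (min_le_left _ _)
        nlinarith
      obtain ⟨x, hx, hx0⟩ := BG.zero_in_of_q_gt (κ := κ) hjn0 hω₁pos hUd hU1d (hz n hn1) hq1
      have h1 := hnext n hn1 x hx.1 hx0
      have h2 := hx.2
      have e : π/ω₁ = π + ε := by
        rw [hω₁def, div_div_eq_mul_div, mul_div_assoc, mul_comm, div_mul_cancel₀ _ hπ.ne']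
      rw [e] at h2
      linarith
    -- lower bound: gap > π/ω₂ = π - ε'
    have hlo : π - ε' < j (n+1) - j n := by
      have hq2 : ∀ x ∈ Set.Ioo (j n) (j (n+1)), 1 + κ/x^2 < ω₂^2 := by
        intro x hx
        have hxA : A ≤ x := le_trans hjnA hx.1.le
        have hκx := hA x hxA
        have h3 : κ/x^2 ≤ |κ|/x^2 := by
          gcongr
          exact le_abs_self κ
        have h4 : |κ|/x^2 < ω₂^2 - 1 := lt_of_lt_of_le hκx (min_le_right _ _)
        nlinarith
      have h := BG.gap_gt_of_q_lt (κ := κ) hjn0 (by linarith [hgap0 n hn1]) hω₂pos hUd hU1d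
        (hz n hn1) (hz (n+1) (by omega)) (hne n hn1) hq2
      have e : π/ω₂ = π - ε' := by
        rw [hω₂def, div_div_eq_mul_div, mul_div_assoc, mul_comm, div_mul_cancel₀ _ hπ.ne']
      rw [e] at h
      exact h
    rw [Real.dist_eq, abs_lt]
    constructor
    · linarith
    · linarith
  have chain_lt : ∀ (g : ℕ → ℝ), (∀ k, 1 ≤ k → g (k+1) < g k) →
      ∀ n, 1 ≤ n → ∀ m, n < m → g m < g n := by
    intro g hg n hn m hm
    induction m with
    | zero => omega
    | succ m ih =>
      rcases Nat.lt_or_ge n m with h|h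
      · exact lt_trans (hg m (by omega)) (ih h)
      · have he : n = m := by omega
        subst he
        exact hg n hn
  refine ⟨?_, ?_, ?_⟩
  · -- strictly decreasing gaps
    intro hv n hn m hm hnm
    have hκneg : κ < 0 := by
      rw [hκ]
      nlinarith [sq_abs ν, abs_nonneg ν, hv]
    have hstep : ∀ k, 1 ≤ k → j (k+1+1) - j (k+1) < j (k+1) - j k := by
      intro k hk
      obtain ⟨x, hx, hx0⟩ := BG.shift_step hκneg (hpos k hk)
        (hmono k hk (k+1) (by omega) (by omega)) hUd hU1d (hz k hk)
        (hz (k+1) (by omega)) (hne k hk)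
      have h1 := hnext (k+1) (by omega) x hx.1 hx0
      have h2 := hx.2
      linarith
    exact chain_lt (fun k => j (k+1) - j k) hstep n hn m hnm
  · -- strictly increasing gaps
    intro hv n hn m hm hnm
    have hκpos : 0 < κ := by
      rw [hκ]
      nlinarith [sq_abs ν, abs_nonneg ν, hv]
    have hstep : ∀ k, 1 ≤ k → j (k+1) - j k < j (k+1+1) - j (k+1) := by
      intro k hk
      obtain ⟨x, hx, hx0⟩ := BG.shift_step_inc hκpos (hpos k hk)
        (hmono k hk (k+1) (by omega) (by omega))
        (hmono (k+1) (by omega) (k+2) (by omega) (by omega))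
        hUd hU1d (hz (k+1) (by omega)) (hz (k+2) (by omega)) (hne (k+1) (by omega))
      have hgt : j k < x - (j (k+1) - j k) := by
        have := hx.1
        linarith
      have h1 := hnext k hk (x - (j (k+1) - j k)) hgt hx0
      have h2 := hx.2
      linarith
    have h := chain_lt (fun k => j k - j (k+1))
      (fun k hk => by
        have := hstep k hk
        show j (k+1) - j (k+1+1) < j k - j (k+1)
        linarith) n hn m hnm
    have h' : j m - j (m+1) < j n - j (n+1) := h
    linarith
  · -- constant gaps
    intro hv n hn m hm
    have hκ0 : κ = 0 := by
      rw [hκ]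
      have h := sq_abs ν
      rw [hv] at h
      nlinarith [h]
    have hU1' : ∀ x, 0 < x → HasDerivAt U1 (-(U x)) x := by
      intro x hx
      have h := hU1d x hx
      have e : -(1 + κ/x^2) * U x = -(U x) := by
        rw [hκ0, zero_div]
        ring
      rw [e] at h
      exact h
    have hAne : ∀ k, 1 ≤ k → U1 (j k) ≠ 0 := by
      intro k hk hA0
      have hsol := BG.exact_sol hUd hU1' (hpos k hk) (hz k hk)
      have h12 := hmono 1 le_rfl 2 (by omega) (by omega)
      have hj1 := hpos 1 le_rfl
      have hmid : (j 1 + j 2)/2 ∈ Set.Ioo (j 1) (j (1+1)) := by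
        constructor
        · show j 1 < (j 1 + j 2)/2
          linarith
        · show (j 1 + j 2)/2 < j 2
          linarith
      apply hne 1 le_rfl ((j 1 + j 2)/2) hmid
      rw [hsol _ (by linarith), hA0, zero_mul]
    have hgapπ : ∀ k, 1 ≤ k → j (k+1) - j k = π := by
      intro k hk
      have hjk := hpos k hk
      have hsol := BG.exact_sol hUd hU1' hjk (hz k hk)
      have h0 : U (j k + π) = 0 := by
        rw [hsol (j k + π) (by linarith)]
        have e : j k + π - j k = π := by ring
        rw [e, Real.sin_pi, mul_zero]
      have hle : j (k+1) ≤ j k + π := hnext k hk _ (by linarith) h0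
      have hz1 : Real.sin (j (k+1) - j k) = 0 := by
        have h := hz (k+1) (by omega)
        rw [hsol (j (k+1)) (hpos (k+1) (by omega))] at h
        rcases mul_eq_zero.mp h with h'|h'
        · exact absurd h' (hAne k hk)
        · exact h'
      obtain ⟨i, hi⟩ := Real.sin_eq_zero_iff.mp hz1
      have hgap := hgap0 k hk
      have hipos : 0 < (i:ℝ) := by nlinarith
      have hi1 : (1:ℝ) ≤ (i:ℝ) := by
        have : (0:ℤ) < i := by exact_mod_cast hipos
        exact_mod_cast this
      have hile : (i:ℝ) ≤ 1 := by nlinarith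
      have hione : (i:ℝ) = 1 := le_antisymm hile hi1
      rw [hione, one_mul] at hi
      linarith
    rw [hgapπ n hn, hgapπ m hm]
end

section
/- Let 1 ≤ α < 2, set κ = (2−α)/2 and ν = (α−1)/(2−α), let j > 0, and let J_ν be the Bessel function of the first kind of order ν, defined for x > 0 by the convergent series J_ν(x) = Σ_{m≥0} (−1)^m/(m!·Γ(1+ν+m))·(x/2)^{2m+ν}. Define u(x) := x^{(1−α)/2}·J_ν(j·x^κ) for x ∈ (0,1). Then u is differentiable on (0,1) and x^α·u'(x) tends to 0 as x → 0⁺. -/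
open Real Filter

/-- Auxiliary: `n! * Γ(1+ν) ≤ Γ(1+ν+n)` for `ν ≥ 0`. -/
lemma factorial_mul_Gamma_le (ν : ℝ) (hν : 0 ≤ ν) (n : ℕ) :
    (n.factorial : ℝ) * Real.Gamma (1 + ν) ≤ Real.Gamma (1 + ν + n) := by
  induction n with
  | zero => simp
  | succ n ih =>
    have hpos : (0 : ℝ) < 1 + ν + n := by positivity
    have h1 : Real.Gamma (1 + ν + ((n + 1 : ℕ) : ℝ)) = (1 + ν + n) * Real.Gamma (1 + ν + n) := by
      push_cast
      rw [show (1 + ν + ((n:ℝ) + 1) : ℝ) = (1 + ν + (n:ℝ)) + 1 by ring]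
      exact Real.Gamma_add_one (ne_of_gt hpos)
    rw [h1]
    have hGpos : 0 < Real.Gamma (1 + ν + n) := Real.Gamma_pos_of_pos hpos
    calc ((n + 1).factorial : ℝ) * Real.Gamma (1 + ν) 
        = (n + 1) * ((n.factorial : ℝ) * Real.Gamma (1 + ν)) := by
          rw [Nat.factorial_succ]; push_cast; ring
      _ ≤ (n + 1) * Real.Gamma (1 + ν + n) := by
          have : (0 : ℝ) ≤ (n : ℝ) + 1 := by positivity
          exact mul_le_mul_of_nonneg_left ih this
      _ ≤ (1 + ν + n) * Real.Gamma (1 + ν + n) := by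
          apply mul_le_mul_of_nonneg_right _ hGpos.le
          linarith

/-- Strongly degenerate case `1 ≤ α < 2`: with `κ = (2−α)/2`,
`ν = (α−1)/(2−α)` and `j > 0`, the function `u(x) = x^{(1−α)/2}·J_ν(j·x^κ)` is
differentiable on `(0,1)` and `x^α·u'(x) → 0` as `x → 0⁺`, where `J_ν` is the Bessel
function of the first kind. -/
theorem strongly_degenerate_weighted_neumann_at_zero
    (α : ℝ) (hα1 : 1 ≤ α) (hα2 : α < 2) (j : ℝ) (hj : 0 < j)
    (J : ℝ → ℝ)
    (hJ : ∀ x : ℝ, 0 < x →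
      J x = ∑' m : ℕ,
        ((-1 : ℝ) ^ m / (m.factorial * Real.Gamma (1 + (α - 1) / (2 - α) + m))) *
          (x / 2) ^ (2 * (m : ℝ) + (α - 1) / (2 - α)))
    (u : ℝ → ℝ)
    (hu : ∀ x : ℝ, u x = x ^ ((1 - α) / 2) * J (j * x ^ ((2 - α) / 2))) :
    (∀ x ∈ Set.Ioo (0 : ℝ) 1, DifferentiableAt ℝ u x) ∧
    Tendsto (fun x : ℝ => x ^ α * deriv u x) (nhdsWithin 0 (Set.Ioi 0)) (nhds 0) := by
  have h2α : (0 : ℝ) < 2 - α := by linarith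
  set ν : ℝ := (α - 1) / (2 - α) with hνdef
  have hν : 0 ≤ ν := div_nonneg (by linarith) h2α.le
  have hj2 : (0 : ℝ) < j / 2 := by linarith
  -- the coefficient sequence
  set c : ℕ → ℝ := fun m =>
    ((-1 : ℝ) ^ m / (m.factorial * Real.Gamma (1 + ν + m))) * (j / 2) ^ (2 * (m : ℝ) + ν)
    with hcdef
  have hGpos : ∀ n : ℕ, (0 : ℝ) < Real.Gamma (1 + ν + n) := fun n =>
    Real.Gamma_pos_of_pos (by positivity)
  have hG1pos : (0 : ℝ) < Real.Gamma (1 + ν) := Real.Gamma_pos_of_pos (by positivity)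
  -- summability of the norms, hence infinite radius
  have hsum : ∀ r : NNReal,
      Summable fun n => ‖FormalMultilinearSeries.ofScalars ℝ c n‖ * (r : ℝ) ^ n := by
    intro r
    have hbound : ∀ n : ℕ, ‖FormalMultilinearSeries.ofScalars ℝ c n‖ * (r : ℝ) ^ n ≤
        ((j / 2) ^ ν / Real.Gamma (1 + ν)) * (((j / 2) ^ 2 * r) ^ n / n.factorial) := by
      intro n
      rw [FormalMultilinearSeries.ofScalars_norm]
      have hcn : ‖c n‖ = (j / 2) ^ (2 * (n : ℝ) + ν) / (n.factorial * Real.Gamma (1 + ν + n)) := by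
        rw [hcdef]
        rw [norm_mul, norm_div, norm_pow, norm_neg, norm_one, one_pow]
        rw [Real.norm_of_nonneg (by positivity : (0:ℝ) ≤ (n.factorial : ℝ) * Real.Gamma (1 + ν + n))]
        rw [Real.norm_of_nonneg (Real.rpow_nonneg hj2.le _)]
        ring
      rw [hcn]
      have hrpow : (j / 2) ^ (2 * (n : ℝ) + ν) = ((j / 2) ^ 2) ^ n * (j / 2) ^ ν := by
        rw [Real.rpow_add hj2]
        congr 1
        rw [show (2 * (n : ℝ)) = ((2 * n : ℕ) : ℝ) by push_cast; ring,
          Real.rpow_natCast, pow_mul]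
      rw [hrpow]
      have hfac : (n.factorial : ℝ) * (n.factorial : ℝ) * Real.Gamma (1 + ν)
          ≤ (n.factorial : ℝ) * Real.Gamma (1 + ν + n) := by
        have := factorial_mul_Gamma_le ν hν n
        have hfn : (0 : ℝ) ≤ (n.factorial : ℝ) := by positivity
        calc (n.factorial : ℝ) * (n.factorial : ℝ) * Real.Gamma (1 + ν)
            = (n.factorial : ℝ) * ((n.factorial : ℝ) * Real.Gamma (1 + ν)) := by ring
          _ ≤ (n.factorial : ℝ) * Real.Gamma (1 + ν + n) :=
            mul_le_mul_of_nonneg_left this hfn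
      have hfacpos : (0 : ℝ) < (n.factorial : ℝ) := by positivity
      have h1 : ((j / 2) ^ 2) ^ n * (j / 2) ^ ν / (n.factorial * Real.Gamma (1 + ν + n)) * (r:ℝ) ^ n
          ≤ ((j / 2) ^ 2) ^ n * (j / 2) ^ ν /
              ((n.factorial : ℝ) * (n.factorial : ℝ) * Real.Gamma (1 + ν)) * (r:ℝ) ^ n := by
        apply mul_le_mul_of_nonneg_right _ (by positivity)
        apply div_le_div_of_nonneg_left (by positivity) (by positivity) hfac
      refine h1.trans ?_
      have hfn1 : (1 : ℝ) ≤ (n.factorial : ℝ) := by exact_mod_cast n.factorial_pos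
      have h2 : ((j / 2) ^ 2) ^ n * (j / 2) ^ ν /
            ((n.factorial : ℝ) * (n.factorial : ℝ) * Real.Gamma (1 + ν)) * (r:ℝ) ^ n
          ≤ ((j / 2) ^ 2) ^ n * (j / 2) ^ ν /
            ((n.factorial : ℝ) * Real.Gamma (1 + ν)) * (r:ℝ) ^ n := by
        apply mul_le_mul_of_nonneg_right _ (by positivity)
        apply div_le_div_of_nonneg_left (by positivity) (by positivity)
        calc (n.factorial:ℝ) * Real.Gamma (1+ν)
            = 1 * ((n.factorial:ℝ) * Real.Gamma (1+ν)) := (one_mul _).symm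
          _ ≤ (n.factorial:ℝ) * ((n.factorial:ℝ) * Real.Gamma (1+ν)) :=
              mul_le_mul_of_nonneg_right hfn1 (by positivity)
          _ = (n.factorial:ℝ) * (n.factorial:ℝ) * Real.Gamma (1+ν) := by ring
      refine h2.trans (le_of_eq ?_)
      rw [mul_pow]
      field_simp
    apply Summable.of_nonneg_of_le (fun n => by positivity) hbound
    exact (Real.summable_pow_div_factorial ((j / 2) ^ 2 * r)).mul_left _
  have hrad : (FormalMultilinearSeries.ofScalars ℝ c).radius = ⊤ :=
    FormalMultilinearSeries.radius_eq_top_of_summable_norm _ hsum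
  -- the sum function
  set f : ℝ → ℝ := (FormalMultilinearSeries.ofScalars ℝ c).sum with hfdef
  have hball : HasFPowerSeriesOnBall f (FormalMultilinearSeries.ofScalars ℝ c) 0 ⊤ := by
    rw [← hrad]
    exact (FormalMultilinearSeries.ofScalars ℝ c).hasFPowerSeriesOnBall (by rw [hrad]; simp)
  have hfa : AnalyticOnNhd ℝ f Set.univ := fun y _ =>
    hball.analyticAt_of_mem (by simp [EMetric.ball, edist_lt_top])
  have hfd : AnalyticOnNhd ℝ (deriv f) Set.univ := hfa.deriv
  -- value identity : u x = f (x ^ (2 - α)) for x > 0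
  have hval : ∀ x : ℝ, 0 < x → u x = f (x ^ (2 - α)) := by
    intro x hx
    have hjx : 0 < j * x ^ ((2 - α) / 2) := by positivity
    rw [hu x, hJ _ hjx]
    have hsumEq : f (x ^ (2 - α)) = ∑' m : ℕ, c m • (x ^ (2 - α)) ^ m :=
      FormalMultilinearSeries.ofScalars_sum_eq c (x ^ (2 - α))
    rw [hsumEq, ← tsum_mul_left]
    apply tsum_congr
    intro m
    have hxκ : (0 : ℝ) < x ^ ((2 - α) / 2) := Real.rpow_pos_of_pos hx _
    have e1 : j * x ^ ((2 - α) / 2) / 2 = (j / 2) * x ^ ((2 - α) / 2) := by ring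
    rw [e1, Real.mul_rpow hj2.le hxκ.le, ← Real.rpow_natCast (x ^ (2 - α)) m,
      ← Real.rpow_mul hx.le, ← Real.rpow_mul hx.le]
    have e2 : (2 - α) / 2 * (2 * (m : ℝ) + ν) = (2 - α) * m + (α - 1) / 2 := by
      rw [hνdef]; field_simp
    rw [e2, Real.rpow_add hx, smul_eq_mul, hcdef]
    have e3 : x ^ ((1 - α) / 2) * x ^ ((α - 1) / 2) = 1 := by
      rw [← Real.rpow_add hx, show (1 - α) / 2 + (α - 1) / 2 = 0 by ring, Real.rpow_zero]
    calc x ^ ((1 - α) / 2) *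
          ((-1:ℝ) ^ m / (m.factorial * Real.Gamma (1 + ν + m)) *
            ((j / 2) ^ (2 * (m:ℝ) + ν) * (x ^ ((2 - α) * m) * x ^ ((α - 1) / 2))))
        = (x ^ ((1 - α) / 2) * x ^ ((α - 1) / 2)) *
          ((-1:ℝ) ^ m / (m.factorial * Real.Gamma (1 + ν + m)) *
            (j / 2) ^ (2 * (m:ℝ) + ν) * x ^ ((2 - α) * m)) := by ring
      _ = (-1:ℝ) ^ m / (m.factorial * Real.Gamma (1 + ν + m)) *
            (j / 2) ^ (2 * (m:ℝ) + ν) * x ^ ((2 - α) * m) := by rw [e3, one_mul]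
  -- derivative of u for x > 0
  have hderiv : ∀ x : ℝ, 0 < x →
      HasDerivAt u (deriv f (x ^ (2 - α)) * ((2 - α) * x ^ (2 - α - 1))) x := by
    intro x hx
    have hinner : HasDerivAt (fun y : ℝ => y ^ (2 - α)) ((2 - α) * x ^ (2 - α - 1)) x :=
      Real.hasDerivAt_rpow_const (Or.inl (ne_of_gt hx))
    have hfdiff : HasDerivAt f (deriv f (x ^ (2 - α))) (x ^ (2 - α)) :=
      ((hfa _ (Set.mem_univ _)).differentiableAt).hasDerivAt
    have hcomp : HasDerivAt (fun y : ℝ => f (y ^ (2 - α)))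
        (deriv f (x ^ (2 - α)) * ((2 - α) * x ^ (2 - α - 1))) x :=
      by have := hfdiff.comp x hinner; exact this
    apply hcomp.congr_of_eventuallyEq
    filter_upwards [Ioi_mem_nhds hx] with y hy
    exact hval y hy
  constructor
  · intro x hx
    exact (hderiv x hx.1).differentiableAt
  · -- the limit
    have hEq : (fun x : ℝ => x ^ α * deriv u x) =ᶠ[nhdsWithin (0:ℝ) (Set.Ioi 0)]
        fun x : ℝ => deriv f (x ^ (2 - α)) * ((2 - α) * x) := by
      filter_upwards [self_mem_nhdsWithin] with x hx
      have hx : (0 : ℝ) < x := hx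
      rw [(hderiv x hx).deriv]
      have : x ^ α * x ^ (2 - α - 1) = x := by
        rw [← Real.rpow_add hx, show α + (2 - α - 1) = 1 by ring, Real.rpow_one]
      calc x ^ α * (deriv f (x ^ (2 - α)) * ((2 - α) * x ^ (2 - α - 1)))
          = deriv f (x ^ (2 - α)) * ((2 - α) * (x ^ α * x ^ (2 - α - 1))) := by ring
        _ = deriv f (x ^ (2 - α)) * ((2 - α) * x) := by rw [this]
    have h1 : Tendsto (fun x : ℝ => x ^ (2 - α)) (nhdsWithin 0 (Set.Ioi 0)) (nhds 0) := by
      have hc : ContinuousAt (fun x : ℝ => x ^ (2 - α)) 0 :=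
        Real.continuousAt_rpow_const 0 (2 - α) (Or.inr h2α.le)
      have ht := hc.tendsto.mono_left (nhdsWithin_le_nhds (s := Set.Ioi (0:ℝ)))
      rwa [Real.zero_rpow (ne_of_gt h2α)] at ht
    have h2 : Tendsto (deriv f) (nhds (0:ℝ)) (nhds (deriv f 0)) :=
      ((hfd 0 (Set.mem_univ _)).continuousAt).tendsto
    have h3 : Tendsto (fun x : ℝ => (2 - α) * x) (nhdsWithin 0 (Set.Ioi 0)) (nhds 0) := by
      have : Tendsto (fun x : ℝ => (2 - α) * x) (nhds 0) (nhds ((2 - α) * 0)) :=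
        (continuous_const.mul continuous_id).tendsto 0
      rw [mul_zero] at this
      exact this.mono_left nhdsWithin_le_nhds
    have := ((h2.comp h1).mul h3)
    rw [mul_zero] at this
    exact Tendsto.congr' hEq.symm this
end
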